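/- Let H be a complex Hilbert space, G a group, and U : G → U(H) a unitary representation (a group homomorphism into the group of unitary operators on H). Let Ω ∈ H be a unit vector with U(g)Ω = Ω for all g ∈ G. Let K₁ and K₂ be closed subspaces of H, each containing Ω and each invariant under U(g) for every g ∈ G. Assume: (i) every x ∈ K₁ satisfying U(g)x = x for all g ∈ G is a scalar multiple of Ω; and (ii) U(g)y = y for all y ∈ K₂ and all g ∈ G. Then for all x ∈ K₁ and y ∈ K₂ one has ⟨x, y⟩ = ⟨x, Ω⟩⟨Ω, y⟩. -/

import Mathlib

open scoped InnerProductSpace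

/-- Hilbert-space core of Theorem 3.3, forward direction.
Let `H` be a complex Hilbert space, `G` a group and `U` a unitary representation of `G`
on `H`. Let `Ω` be a `U`-invariant unit vector, and `K₁`, `K₂` closed `U`-invariant
subspaces containing `Ω`. If the only `U`-fixed vectors in `K₁` are the scalar multiples
of `Ω`, and every vector of `K₂` is `U`-fixed, then `⟪x, y⟫ = ⟪x, Ω⟫ * ⟪Ω, y⟫` for all
`x ∈ K₁`, `y ∈ K₂`. -/
theorem free_joinings_stmt0
    {H : Type*} [NormedAddCommGroup H] [InnerProductSpace ℂ H] [CompleteSpace H]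
    {G : Type*} [Group G] (U : G →* (H ≃ₗᵢ[ℂ] H))
    (Ω : H) (hΩnorm : ‖Ω‖ = 1) (hΩfix : ∀ g : G, U g Ω = Ω)
    (K₁ K₂ : Submodule ℂ H)
    (hK₁closed : IsClosed (K₁ : Set H)) (hK₂closed : IsClosed (K₂ : Set H))
    (hΩK₁ : Ω ∈ K₁) (hΩK₂ : Ω ∈ K₂)
    (hK₁inv : ∀ g : G, U g '' (K₁ : Set H) = (K₁ : Set H))
    (hK₂inv : ∀ g : G, U g '' (K₂ : Set H) = (K₂ : Set H))
    (herg : ∀ x ∈ K₁, (∀ g : G, U g x = x) → ∃ c : ℂ, x = c • Ω)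
    (hid : ∀ y ∈ K₂, ∀ g : G, U g y = y) :
    ∀ x ∈ K₁, ∀ y ∈ K₂, ⟪x, y⟫_ℂ = ⟪x, Ω⟫_ℂ * ⟪Ω, y⟫_ℂ := by
  haveI : CompleteSpace K₁ := hK₁closed.completeSpace_coe
  intro x hx y hy
  set p : H := (K₁.orthogonalProjectionOnto y : H) with hp
  have hpmem : p ∈ K₁ := (K₁.orthogonalProjectionOnto y).2
  -- p is U-fixed
  have hpfix : ∀ g : G, U g p = p := by
    intro g
    have hUp : U g p ∈ K₁ := by
      have : U g p ∈ (K₁ : Set H) := by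
        rw [← hK₁inv g]; exact Set.mem_image_of_mem _ hpmem
      exact this
    have : (K₁.orthogonalProjectionOnto y : H) = U g p := by
      apply Submodule.eq_starProjection_of_mem_of_inner_eq_zero hUp
      intro w hw
      have hy' : U g y = y := hid y hy g
      have hw' : (U g).symm w ∈ K₁ := by
        have hw : w ∈ (⇑(U g) '' (K₁ : Set H)) := by rw [hK₁inv g]; exact hw
        obtain ⟨v, hv, hvw⟩ := hw
        simpa [← hvw] using hv
      calc ⟪y - U g p, w⟫_ℂ = ⟪U g (y - p), U g ((U g).symm w)⟫_ℂ := by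
              rw [(U g).apply_symm_apply, map_sub, hy']
        _ = ⟪y - p, (U g).symm w⟫_ℂ := (U g).inner_map_map _ _
        _ = 0 := Submodule.starProjection_inner_eq_zero y _ hw'
    rw [← this, ← hp]
  obtain ⟨c, hc⟩ := herg p hpmem hpfix
  have horth : ∀ w ∈ K₁, ⟪y - p, w⟫_ℂ = 0 := fun w hw =>
    Submodule.starProjection_inner_eq_zero y w hw
  have h1 : ⟪x, y⟫_ℂ = ⟪x, p⟫_ℂ := by
    have := horth x hx
    rw [inner_sub_left] at this
    have : ⟪y, x⟫_ℂ = ⟪p, x⟫_ℂ := by linear_combination this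
    calc ⟪x, y⟫_ℂ = starRingEnd ℂ ⟪y, x⟫_ℂ := (inner_conj_symm _ _).symm
      _ = starRingEnd ℂ ⟪p, x⟫_ℂ := by rw [this]
      _ = ⟪x, p⟫_ℂ := inner_conj_symm _ _
  have h2 : ⟪Ω, y⟫_ℂ = c := by
    have := horth Ω hΩK₁
    rw [inner_sub_left] at this
    have hΩy : ⟪Ω, y⟫_ℂ = ⟪Ω, p⟫_ℂ := by
      have h' : ⟪y, Ω⟫_ℂ = ⟪p, Ω⟫_ℂ := by linear_combination this
      calc ⟪Ω, y⟫_ℂ = starRingEnd ℂ ⟪y, Ω⟫_ℂ := (inner_conj_symm _ _).symm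
        _ = starRingEnd ℂ ⟪p, Ω⟫_ℂ := by rw [h']
        _ = ⟪Ω, p⟫_ℂ := inner_conj_symm _ _
    rw [hΩy, hc, inner_smul_right, inner_self_eq_norm_sq_to_K, hΩnorm]
    norm_num
  rw [h1, hc, inner_smul_right, h2]; ring
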